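/- Let G be a simple graph with n vertices and m ≥ 1 edges. For any edge uv ∈ E(G) with endpoint degrees d_u and d_v, the Ky Fan 2-norm of the LI-matrix satisfies ||LI(G)||_{F_2} ≥ |(d_u + d_v + √((d_u − d_v)² + 4))/2 − 2m/n| + |(d_u + d_v − √((d_u − d_v)² + 4))/2 − 2m/n| (the two terms being the absolute values of the eigenvalues of the 2×2 principal submatrix of LI(G) indexed by u and v). -/

import Mathlib

open Finset SimpleGraph

attribute [local instance] Classical.propDecidable

/-- The `i`-th largest value of the tuple `f` (values sorted in non-increasing order). -/
noncomputable def sortDesc {n : ℕ} (f : Fin n → ℝ) : Fin n → ℝ :=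
  fun i => f (Tuple.sort f i.rev)

/-- The Laplacian eigenvalues of `G`, in non-increasing order:
`lapEig G 0 = μ₁ ≥ lapEig G 1 = μ₂ ≥ ⋯`. -/
noncomputable def lapEig {n : ℕ} (G : SimpleGraph (Fin n)) : Fin n → ℝ :=
  sortDesc (SimpleGraph.posSemidef_lapMatrix ℝ G).isHermitian.eigenvalues

/-- The number of edges of `G`. -/
noncomputable def numEdges {n : ℕ} (G : SimpleGraph (Fin n)) : ℕ :=
  G.edgeFinset.card

/-- The singular values of the LI-matrix `LI(G) = L(G) - (2m/n)·Iₙ`, in non-increasing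
order; they are the values `|μᵢ - 2m/n|` sorted non-increasingly. -/
noncomputable def LIsv {n : ℕ} (G : SimpleGraph (Fin n)) : Fin n → ℝ :=
  sortDesc (fun i => |lapEig G i - 2 * numEdges G / n|)

/-- The Ky Fan `k`-norm of the LI-matrix of `G`: the sum of the `k` largest singular
values of `LI(G)`. -/
noncomputable def kyFanLI {n : ℕ} (G : SimpleGraph (Fin n)) (k : ℕ) : ℝ :=
  ∑ i ∈ Finset.univ.filter (fun i : Fin n => (i : ℕ) < k), LIsv G i

/-- `S_k(L(G))`, the sum of the `k` largest Laplacian eigenvalues of `G`. -/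
noncomputable def lapSum {n : ℕ} (G : SimpleGraph (Fin n)) (k : ℕ) : ℝ :=
  ∑ i ∈ Finset.univ.filter (fun i : Fin n => (i : ℕ) < k), lapEig G i

section Aux

open Matrix

lemma sortDesc_comp {n : ℕ} (f : Fin n → ℝ) (e : Equiv.Perm (Fin n)) :
    sortDesc (f ∘ e) = sortDesc f := by
  funext i
  exact congrFun (Tuple.comp_perm_comp_sort_eq_comp_sort (f := f) (σ := e)) i.rev

lemma sortDesc_apply {n : ℕ} (f : Fin n → ℝ) (i : Fin n) :
    sortDesc f i = f (Tuple.sort f i.rev) := rfl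

set_option maxHeartbeats 2000000 in
lemma sortDesc_max {n : ℕ} (hn : 2 ≤ n) (f : Fin n → ℝ) :
    ∃ j0 : Fin n, f j0 = sortDesc f ⟨0, by omega⟩ ∧ (∀ i, f i ≤ sortDesc f ⟨0, by omega⟩) ∧
      ∀ i, i ≠ j0 → f i ≤ sortDesc f ⟨1, by omega⟩ := by
  have mono := Tuple.monotone_sort f
  have h0 : ((⟨0, by omega⟩ : Fin n)).rev = ⟨n - 1, by omega⟩ := by
    ext; simp [Fin.rev]
  have h1 : ((⟨1, by omega⟩ : Fin n)).rev = ⟨n - 2, by omega⟩ := by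
    ext; simp [Fin.rev]
  refine ⟨Tuple.sort f ⟨n - 1, by omega⟩, ?_, ?_, ?_⟩
  · rw [sortDesc_apply, h0]
  · intro i
    have hi : f i = (f ∘ Tuple.sort f) ((Tuple.sort f).symm i) := by simp
    rw [hi, sortDesc_apply, h0]
    refine mono (Fin.le_def.mpr ?_)
    have := ((Tuple.sort f).symm i).2
    simp only [Fin.val_mk]
    omega
  · intro i hi
    have hne : (Tuple.sort f).symm i ≠ ⟨n - 1, by omega⟩ := by
      intro h
      exact hi (by simpa using congrArg (Tuple.sort f) h)
    have hval : ((Tuple.sort f).symm i).val ≤ n - 2 := by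
      have h2 := ((Tuple.sort f).symm i).2
      have : ((Tuple.sort f).symm i).val ≠ n - 1 := fun h => hne (Fin.ext h)
      omega
    have hi2 : f i = (f ∘ Tuple.sort f) ((Tuple.sort f).symm i) := by simp
    rw [hi2, sortDesc_apply, h1]
    refine mono (Fin.le_def.mpr ?_)
    simp only [Fin.val_mk]
    omega

lemma sortDesc_nonneg {n : ℕ} (f : Fin n → ℝ) (hf : ∀ i, 0 ≤ f i) (i : Fin n) :
    0 ≤ sortDesc f i := hf _

lemma weight_bound {n : ℕ} (hn : 2 ≤ n) (f w : Fin n → ℝ) (h1 : ∀ i, |w i| ≤ 1)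
    (h2 : ∑ i, |w i| ≤ 2) :
    ∑ i, w i * f i ≤
      sortDesc (fun i => |f i|) ⟨0, by omega⟩ + sortDesc (fun i => |f i|) ⟨1, by omega⟩ := by
  set g : Fin n → ℝ := fun i => |f i| with hg
  obtain ⟨j0, hj0, hmax, hsec⟩ := sortDesc_max hn g
  set s0 := sortDesc g ⟨0, by omega⟩ with hs0
  set s1 := sortDesc g ⟨1, by omega⟩ with hs1
  have hgnn : ∀ i, 0 ≤ g i := fun i => abs_nonneg _
  have hs1nn : 0 ≤ s1 := sortDesc_nonneg g hgnn _
  have hs01 : s1 ≤ s0 := by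
    rw [hs1, sortDesc_apply]
    exact hmax _
  have step1 : ∑ i, w i * f i ≤ ∑ i, |w i| * g i := by
    apply Finset.sum_le_sum
    intro i _
    calc w i * f i ≤ |w i * f i| := le_abs_self _
    _ = |w i| * g i := abs_mul _ _
  have hmem : j0 ∈ Finset.univ := Finset.mem_univ _
  have split : ∑ i, |w i| * g i = |w j0| * g j0 + ∑ i ∈ Finset.univ.erase j0, |w i| * g i :=
    (Finset.add_sum_erase _ _ hmem).symm
  have splitw : ∑ i, |w i| = |w j0| + ∑ i ∈ Finset.univ.erase j0, |w i| :=
    (Finset.add_sum_erase _ _ hmem).symm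
  have step2 : ∑ i ∈ Finset.univ.erase j0, |w i| * g i ≤
      (∑ i ∈ Finset.univ.erase j0, |w i|) * s1 := by
    rw [Finset.sum_mul]
    apply Finset.sum_le_sum
    intro i hi
    exact mul_le_mul_of_nonneg_left (hsec i (Finset.ne_of_mem_erase hi)) (abs_nonneg _)
  have hwnn : 0 ≤ ∑ i ∈ Finset.univ.erase j0, |w i| :=
    Finset.sum_nonneg fun i _ => abs_nonneg _
  have ha0 : 0 ≤ |w j0| := abs_nonneg _
  have ha1 : |w j0| ≤ 1 := h1 _
  nlinarith [step1, split, step2, splitw, h2, hj0, hs01, hs1nn, hwnn, ha0, ha1,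
    mul_le_mul_of_nonneg_right
      (show ∑ i ∈ Finset.univ.erase j0, |w i| ≤ 2 - |w j0| by linarith) hs1nn]

lemma dot_sum' {n : ℕ} (q : Fin n → ℝ) (g : Fin n → Fin n → ℝ) :
    q ⬝ᵥ (∑ i, g i) = ∑ i, q ⬝ᵥ g i := by
  simp only [dotProduct, Finset.sum_apply, Finset.mul_sum]
  exact Finset.sum_comm

lemma mulVec_sum' {n : ℕ} (A : Matrix (Fin n) (Fin n) ℝ) (g : Fin n → Fin n → ℝ) :
    A *ᵥ (∑ i, g i) = ∑ i, A *ᵥ g i := by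
  have h := map_sum A.mulVecLin g Finset.univ
  simpa only [Matrix.mulVecLin_apply] using h

lemma rayleigh_expand {n : ℕ} (A : Matrix (Fin n) (Fin n) ℝ) (hA : A.IsHermitian)
    (q : Fin n → ℝ) :
    q ⬝ᵥ (A *ᵥ q) = ∑ i, hA.eigenvalues i * (⇑(hA.eigenvectorBasis i) ⬝ᵥ q)^2 := by
  set v : Fin n → Fin n → ℝ := fun i => ⇑(hA.eigenvectorBasis i) with hv
  have hrepr : (∑ i, (v i ⬝ᵥ q) • v i) = q := by
    have h := congrArg WithLp.ofLp (hA.eigenvectorBasis.sum_repr' (WithLp.toLp 2 q))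
    rw [WithLp.ofLp_sum] at h
    simpa [EuclideanSpace.inner_eq_star_dotProduct, dotProduct_comm] using h
  conv_lhs => rw [← hrepr]
  rw [mulVec_sum', dot_sum']
  apply Finset.sum_congr rfl
  intro i _
  rw [Matrix.mulVec_smul, hA.mulVec_eigenvectorBasis i]
  rw [dotProduct_smul, dotProduct_smul, hrepr, dotProduct_comm q (v i)]
  simp only [smul_eq_mul]
  ring

lemma parseval' {n : ℕ} (A : Matrix (Fin n) (Fin n) ℝ) (hA : A.IsHermitian)
    (q : Fin n → ℝ) (hq : q ⬝ᵥ q = 1) :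
    ∑ i, (⇑(hA.eigenvectorBasis i) ⬝ᵥ q)^2 = 1 := by
  set v : Fin n → Fin n → ℝ := fun i => ⇑(hA.eigenvectorBasis i) with hv
  have h : ∑ i, (q ⬝ᵥ v i) * (v i ⬝ᵥ q) = q ⬝ᵥ q := by
    have h := hA.eigenvectorBasis.sum_inner_mul_inner (WithLp.toLp 2 q) (WithLp.toLp 2 q)
    simp only [EuclideanSpace.inner_eq_star_dotProduct, star_trivial] at h
    rw [← h]
    exact Finset.sum_congr rfl fun i _ => by rw [dotProduct_comm q (v i)]
  calc ∑ i, (v i ⬝ᵥ q)^2 = ∑ i, (q ⬝ᵥ v i) * (v i ⬝ᵥ q) := by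
        apply Finset.sum_congr rfl
        intro i _
        rw [sq, dotProduct_comm q (v i)]
    _ = 1 := by rw [h, hq]

lemma bessel' {n : ℕ} (A : Matrix (Fin n) (Fin n) ℝ) (hA : A.IsHermitian)
    (q1 q2 : Fin n → ℝ) (h11 : q1 ⬝ᵥ q1 = 1) (h22 : q2 ⬝ᵥ q2 = 1) (h12 : q1 ⬝ᵥ q2 = 0)
    (i : Fin n) :
    (⇑(hA.eigenvectorBasis i) ⬝ᵥ q1)^2 + (⇑(hA.eigenvectorBasis i) ⬝ᵥ q2)^2 ≤ 1 := by
  set w : Fin n → ℝ := ⇑(hA.eigenvectorBasis i) with hw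
  set c1 := w ⬝ᵥ q1 with hc1
  set c2 := w ⬝ᵥ q2 with hc2
  have hvi : w ⬝ᵥ w = 1 := by
    have h := orthonormal_iff_ite.mp hA.eigenvectorBasis.orthonormal i i
    simpa only [if_pos rfl, EuclideanSpace.inner_eq_star_dotProduct, star_trivial, if_true] using h
  have hx : (0:ℝ) ≤ (w - c1 • q1 - c2 • q2) ⬝ᵥ (w - c1 • q1 - c2 • q2) := by
    apply Finset.sum_nonneg
    intro j _
    exact mul_self_nonneg _
  have hexp : (w - c1 • q1 - c2 • q2) ⬝ᵥ (w - c1 • q1 - c2 • q2) = 1 - c1^2 - c2^2 := by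
    simp only [sub_dotProduct, dotProduct_sub, smul_dotProduct,
      dotProduct_smul, smul_eq_mul]
    rw [dotProduct_comm q1 w, dotProduct_comm q2 w, dotProduct_comm q2 q1,
      hvi, h11, h22, h12, ← hc1, ← hc2]
    ring
  nlinarith [hx, hexp]

lemma key_bound {n : ℕ} (hn : 2 ≤ n) (A : Matrix (Fin n) (Fin n) ℝ) (hA : A.IsHermitian)
    (c : ℝ) (q1 q2 : Fin n → ℝ)
    (h11 : q1 ⬝ᵥ q1 = 1) (h22 : q2 ⬝ᵥ q2 = 1) (h12 : q1 ⬝ᵥ q2 = 0)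
    (e1 e2 : ℝ) (he1 : |e1| ≤ 1) (he2 : |e2| ≤ 1) :
    e1 * (q1 ⬝ᵥ (A *ᵥ q1) - c) + e2 * (q2 ⬝ᵥ (A *ᵥ q2) - c) ≤
      sortDesc (fun i => |hA.eigenvalues i - c|) ⟨0, by omega⟩ +
      sortDesc (fun i => |hA.eigenvalues i - c|) ⟨1, by omega⟩ := by
  set v : Fin n → Fin n → ℝ := fun i => ⇑(hA.eigenvectorBasis i) with hv
  set μ := hA.eigenvalues with hμ
  have hp1 := parseval' A hA q1 h11
  have hp2 := parseval' A hA q2 h22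
  set t : Fin n → ℝ := fun i => e1 * (v i ⬝ᵥ q1)^2 + e2 * (v i ⬝ᵥ q2)^2 with ht
  have habs : ∀ i, |t i| ≤ (v i ⬝ᵥ q1)^2 + (v i ⬝ᵥ q2)^2 := by
    intro i
    refine (abs_add_le _ _).trans ?_
    rw [abs_mul, abs_mul, abs_of_nonneg (sq_nonneg (v i ⬝ᵥ q1)),
      abs_of_nonneg (sq_nonneg (v i ⬝ᵥ q2))]
    have g1 : |e1| * (v i ⬝ᵥ q1)^2 ≤ 1 * (v i ⬝ᵥ q1)^2 :=
      mul_le_mul_of_nonneg_right he1 (sq_nonneg _)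
    have g2 : |e2| * (v i ⬝ᵥ q2)^2 ≤ 1 * (v i ⬝ᵥ q2)^2 :=
      mul_le_mul_of_nonneg_right he2 (sq_nonneg _)
    linarith
  have ht1 : ∀ i, |t i| ≤ 1 := fun i =>
    (habs i).trans (bessel' A hA q1 q2 h11 h22 h12 i)
  have ht2 : ∑ i, |t i| ≤ 2 := by
    calc ∑ i, |t i| ≤ ∑ i, ((v i ⬝ᵥ q1)^2 + (v i ⬝ᵥ q2)^2) :=
          Finset.sum_le_sum fun i _ => habs i
      _ = 2 := by rw [Finset.sum_add_distrib, hp1, hp2]; norm_num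
  have hLHS : e1 * (q1 ⬝ᵥ (A *ᵥ q1) - c) + e2 * (q2 ⬝ᵥ (A *ᵥ q2) - c)
      = ∑ i, t i * (μ i - c) := by
    rw [rayleigh_expand A hA q1, rayleigh_expand A hA q2]
    have hsum : ∑ i, t i * (μ i - c)
        = e1 * ∑ i, μ i * (v i ⬝ᵥ q1)^2 + e2 * ∑ i, μ i * (v i ⬝ᵥ q2)^2
          - e1 * c * ∑ i, (v i ⬝ᵥ q1)^2 - e2 * c * ∑ i, (v i ⬝ᵥ q2)^2 := by
      simp only [Finset.mul_sum, ← Finset.sum_sub_distrib, ← Finset.sum_add_distrib]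
      apply Finset.sum_congr rfl
      intro i _
      ring
    rw [hsum, hp1, hp2]
    ring
  rw [hLHS]
  exact weight_bound hn (fun i => μ i - c) t ht1 ht2

end Aux

/-- For any edge `uv` of a simple graph `G` with `n` vertices and `m ≥ 1`
edges,
`‖LI(G)‖_{F_2} ≥ |(d_u+d_v+√((d_u-d_v)²+4))/2 - 2m/n| + |(d_u+d_v-√((d_u-d_v)²+4))/2 - 2m/n|`. -/
theorem stmt_7 {n : ℕ} (G : SimpleGraph (Fin n)) (hm : 1 ≤ numEdges G)
    (u v : Fin n) (huv : G.Adj u v) :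
    |((G.degree u : ℝ) + (G.degree v : ℝ) +
          Real.sqrt (((G.degree u : ℝ) - (G.degree v : ℝ)) ^ 2 + 4)) / 2
        - 2 * (numEdges G : ℝ) / n| +
      |((G.degree u : ℝ) + (G.degree v : ℝ) -
          Real.sqrt (((G.degree u : ℝ) - (G.degree v : ℝ)) ^ 2 + 4)) / 2
        - 2 * (numEdges G : ℝ) / n| ≤ kyFanLI G 2 := by
  classical
  have hn2 : 2 ≤ n := by
    by_contra h
    push_neg at h
    interval_cases n
    · exact u.elim0
    · exact huv.ne (Subsingleton.elim u v)
  set a : ℝ := (G.degree u : ℝ) with ha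
  set b : ℝ := (G.degree v : ℝ) with hb
  set c : ℝ := 2 * (numEdges G : ℝ) / n with hc
  set r : ℝ := Real.sqrt ((a - b) ^ 2 + 4) with hr
  set A : Matrix (Fin n) (Fin n) ℝ := G.lapMatrix ℝ with hA
  have hAH : A.IsHermitian := (SimpleGraph.posSemidef_lapMatrix ℝ G).isHermitian
  -- rewrite RHS
  have hLI : LIsv G = sortDesc (fun i => |hAH.eigenvalues i - c|) := by
    have h := sortDesc_comp (fun i => |hAH.eigenvalues i - c|)
      (Fin.revPerm.trans (Tuple.sort hAH.eigenvalues))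
    rw [← h]
    rfl
  have hfilter : Finset.univ.filter (fun i : Fin n => (i : ℕ) < 2) =
      ({⟨0, by omega⟩, ⟨1, by omega⟩} : Finset (Fin n)) := by
    ext i
    simp only [Finset.mem_filter, Finset.mem_univ, true_and, Finset.mem_insert,
      Finset.mem_singleton, Fin.ext_iff]
    omega
  have hne01 : (⟨0, by omega⟩ : Fin n) ≠ ⟨1, by omega⟩ := by
    simp [Fin.ext_iff]
  set s0 := sortDesc (fun i => |hAH.eigenvalues i - c|) ⟨0, by omega⟩ with hs0
  set s1 := sortDesc (fun i => |hAH.eigenvalues i - c|) ⟨1, by omega⟩ with hs1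
  have hKF : kyFanLI G 2 = s0 + s1 := by
    rw [kyFanLI, hfilter, Finset.sum_pair hne01, hLI]
  -- base dot products
  set su : Fin n → ℝ := Pi.single u 1 with hsu
  set sv : Fin n → ℝ := Pi.single v 1 with hsv
  open Matrix in
  have hsuu : su ⬝ᵥ su = 1 := by simp [hsu]
  open Matrix in
  have hsvv : sv ⬝ᵥ sv = 1 := by simp [hsv]
  open Matrix in
  have hsuv : su ⬝ᵥ sv = 0 := by
    simp [hsu, hsv, Pi.single_apply, huv.ne]
  open Matrix in
  have hAuu : su ⬝ᵥ (A *ᵥ su) = a := by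
    rw [Matrix.mulVec_single_one]
    simp [hsu, hA, SimpleGraph.lapMatrix, SimpleGraph.degMatrix, ha]
  open Matrix in
  have hAvv : sv ⬝ᵥ (A *ᵥ sv) = b := by
    rw [Matrix.mulVec_single_one]
    simp [hsv, hA, SimpleGraph.lapMatrix, SimpleGraph.degMatrix, hb]
  open Matrix in
  have hAuv : su ⬝ᵥ (A *ᵥ sv) = -1 := by
    rw [Matrix.mulVec_single_one]
    simp only [hsu, hA, SimpleGraph.lapMatrix, SimpleGraph.degMatrix, Matrix.sub_apply,
      Matrix.transpose_apply, single_one_dotProduct, Matrix.col_apply, SimpleGraph.adjMatrix_apply]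
    rw [Matrix.diagonal_apply_ne _ huv.ne]
    simp [huv]
  open Matrix in
  have hAvu : sv ⬝ᵥ (A *ᵥ su) = -1 := by
    rw [Matrix.mulVec_single_one]
    simp only [hsv, hA, SimpleGraph.lapMatrix, SimpleGraph.degMatrix, Matrix.sub_apply,
      Matrix.transpose_apply, single_one_dotProduct, Matrix.col_apply, SimpleGraph.adjMatrix_apply]
    rw [Matrix.diagonal_apply_ne _ huv.ne']
    simp [huv.symm]
  open Matrix in
  have hdot : ∀ α β γ δ : ℝ, (α • su + β • sv) ⬝ᵥ (A *ᵥ (γ • su + δ • sv))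
      = α * γ * a + β * δ * b - α * δ - β * γ := by
    intro α β γ δ
    simp only [Matrix.mulVec_add, Matrix.mulVec_smul, add_dotProduct,
      dotProduct_add, smul_dotProduct, dotProduct_smul, smul_eq_mul]
    rw [hAuu, hAvv, hAuv, hAvu]
    ring
  open Matrix in
  have hnorm : ∀ α β γ δ : ℝ, (α • su + β • sv) ⬝ᵥ (γ • su + δ • sv) = α * γ + β * δ := by
    intro α β γ δ
    simp only [add_dotProduct, dotProduct_add, smul_dotProduct,
      dotProduct_smul, smul_eq_mul]
    rw [hsuu, hsvv, hsuv, dotProduct_comm sv su, hsuv]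
    ring
  -- case 1 and 2 : e = (1,1) and (-1,-1) with q1 = su, q2 = sv
  have key1 : (a - c) + (b - c) ≤ s0 + s1 := by
    have h := key_bound hn2 A hAH c su sv hsuu hsvv hsuv 1 1 (by norm_num) (by norm_num)
    rw [hAuu, hAvv] at h
    linarith
  have key2 : -((a - c) + (b - c)) ≤ s0 + s1 := by
    have h := key_bound hn2 A hAH c su sv hsuu hsvv hsuv (-1) (-1) (by norm_num) (by norm_num)
    rw [hAuu, hAvv] at h
    linarith
  -- case 3 : rotated vectors
  have hr4 : (0:ℝ) < (a - b) ^ 2 + 4 := by positivity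
  have hrpos : 0 < r := Real.sqrt_pos.mpr hr4
  have hr2 : r ^ 2 = (a - b) ^ 2 + 4 := Real.sq_sqrt hr4.le
  set t : ℝ := (a - b) / r with htdef
  have htle : |t| ≤ 1 := by
    rw [abs_div, abs_of_pos hrpos, div_le_one hrpos]
    have : |a - b| = Real.sqrt ((a - b) ^ 2) := (Real.sqrt_sq_eq_abs _).symm
    rw [this, hr]
    exact Real.sqrt_le_sqrt (by linarith)
  have ht1 : (0:ℝ) ≤ (1 + t) / 2 := by
    have := abs_le.mp htle
    linarith [this.1]
  have ht2 : (0:ℝ) ≤ (1 - t) / 2 := by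
    have := abs_le.mp htle
    linarith [this.2]
  set α : ℝ := Real.sqrt ((1 + t) / 2) with hαdef
  set β : ℝ := -Real.sqrt ((1 - t) / 2) with hβdef
  have hα2 : α ^ 2 = (1 + t) / 2 := Real.sq_sqrt ht1
  have hβ2 : β ^ 2 = (1 - t) / 2 := by
    rw [hβdef, neg_pow, Real.sq_sqrt ht2]
    ring
  have hαβ : α * β = -(1 / r) := by
    have hrne : r ≠ 0 := ne_of_gt hrpos
    have hprod : (1 + t) / 2 * ((1 - t) / 2) = 1 / r ^ 2 := by
      have htr : t ^ 2 * r ^ 2 = (a - b) ^ 2 := by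
        rw [htdef]; field_simp
      have h4 : (1 - t ^ 2) * r ^ 2 = 4 := by linear_combination hr2 - htr
      field_simp
      linear_combination h4
    have : α * Real.sqrt ((1 - t) / 2) = Real.sqrt ((1 + t) / 2 * ((1 - t) / 2)) :=
      (Real.sqrt_mul ht1 _).symm
    rw [hαdef, hβdef, mul_neg, this, hprod]
    rw [show (1:ℝ) / r ^ 2 = (1 / r) ^ 2 by ring, Real.sqrt_sq (by positivity)]
  open Matrix in
  have key3 : r ≤ s0 + s1 := by
    set q1 : Fin n → ℝ := α • su + β • sv with hq1
    set q2 : Fin n → ℝ := (-β) • su + α • sv with hq2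
    have h11 : q1 ⬝ᵥ q1 = 1 := by
      rw [hq1, hnorm]
      linear_combination hα2 + hβ2
    have h22 : q2 ⬝ᵥ q2 = 1 := by
      rw [hq2, hnorm]
      linear_combination hα2 + hβ2
    have h12 : q1 ⬝ᵥ q2 = 0 := by
      rw [hq1, hq2, hnorm]
      ring
    have h := key_bound hn2 A hAH c q1 q2 h11 h22 h12 1 (-1) (by norm_num) (by norm_num)
    have hv1 : q1 ⬝ᵥ (A *ᵥ q1) = α ^ 2 * a + β ^ 2 * b - 2 * (α * β) := by
      rw [hq1, hdot]; ring
    have hv2 : q2 ⬝ᵥ (A *ᵥ q2) = β ^ 2 * a + α ^ 2 * b + 2 * (α * β) := by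
      rw [hq2, hdot]; ring
    rw [hv1, hv2] at h
    have hval : (α ^ 2 * a + β ^ 2 * b - 2 * (α * β)) - (β ^ 2 * a + α ^ 2 * b + 2 * (α * β))
        = r := by
      rw [hα2, hβ2, hαβ]
      have : t * (a - b) + 4 / r = r := by
        rw [htdef]
        field_simp
        linear_combination -hr2
      linear_combination this
    linarith [h, hval]
  -- conclude
  rw [hKF]
  have hX : ((a + b + r) / 2 - c) + ((a + b - r) / 2 - c) = (a - c) + (b - c) := by ring
  have hY : ((a + b + r) / 2 - c) - ((a + b - r) / 2 - c) = r := by ring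
  have hs0nn : 0 ≤ s0 := sortDesc_nonneg _ (fun i => abs_nonneg _) _
  have hs1nn : 0 ≤ s1 := sortDesc_nonneg _ (fun i => abs_nonneg _) _
  rcases abs_cases ((a + b + r) / 2 - c) with ⟨e1, _⟩ | ⟨e1, _⟩ <;>
    rcases abs_cases ((a + b - r) / 2 - c) with ⟨e2, _⟩ | ⟨e2, _⟩ <;>
    rw [e1, e2] <;> linarith [Real.sqrt_nonneg ((a - b) ^ 2 + 4), key1, key2, key3]
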